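/- arXiv:1907.00547 — 4 statements merged into one kernel-verified Lean document; each statement's English description precedes it below -/
import Mathlib

section
/- Let g ≥ 0 be an integer, let n ≥ 1 be an odd integer, and let ε ∈ {1, −1}. Suppose B_1, …, B_{2g}, C_1, …, C_n are elements of SU(2) (2×2 complex special unitary matrices) satisfying [B_1,B_{g+1}]·[B_2,B_{g+2}]⋯[B_g,B_{2g}]·C_1⋯C_n = ε·I and C_i² = −I for every i = 1, …, n. Then there is no nonzero vector v ∈ ℂ² that is a common eigenvector of all the matrices B_1, …, B_{2g}, C_1, …, C_n; equivalently, no one-dimensional complex subspace of ℂ² is invariant under all of them. -/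
private lemma eig_mul {v : Fin 2 → ℂ} {A B : Matrix (Fin 2) (Fin 2) ℂ} {a b : ℂ}
    (hA : A.mulVec v = a • v) (hB : B.mulVec v = b • v) :
    (A * B).mulVec v = (a * b) • v := by
  rw [← Matrix.mulVec_mulVec, hB, Matrix.mulVec_smul, hA, smul_smul, mul_comm]

private lemma eig_smul_cancel {v : Fin 2 → ℂ} (hv : v ≠ 0) {a b : ℂ}
    (h : a • v = b • v) : a = b := by
  have : (a - b) • v = 0 := by rw [sub_smul, h, sub_self]
  rcases smul_eq_zero.mp this with h' | h'
  · exact sub_eq_zero.mp h'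
  · exact absurd h' hv

private lemma eig_inv {v : Fin 2 → ℂ} (hv : v ≠ 0) {A : Matrix (Fin 2) (Fin 2) ℂ} {a : ℂ}
    (hdet : IsUnit A.det) (hA : A.mulVec v = a • v) :
    a ≠ 0 ∧ A⁻¹.mulVec v = a⁻¹ • v := by
  have hid : A⁻¹.mulVec (A.mulVec v) = v := by
    rw [Matrix.mulVec_mulVec, Matrix.nonsing_inv_mul A hdet, Matrix.one_mulVec]
  rw [hA, Matrix.mulVec_smul] at hid
  have ha : a ≠ 0 := by
    rintro rfl
    simp at hid
    exact hv hid.symm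
  refine ⟨ha, ?_⟩
  have := congrArg (fun w => a⁻¹ • w) hid
  simp only [smul_smul, inv_mul_cancel₀ ha, one_smul] at this
  exact this

private lemma eig_ofFn_prod {v : Fin 2 → ℂ} :
    ∀ (k : ℕ) (M : Fin k → Matrix (Fin 2) (Fin 2) ℂ) (μ : Fin k → ℂ),
      (∀ i, (M i).mulVec v = μ i • v) →
      (List.ofFn M).prod.mulVec v = (∏ i, μ i) • v := by
  intro k
  induction k with
  | zero => intro M μ _; simp [Matrix.one_mulVec]
  | succ m ih =>
    intro M μ h
    rw [List.ofFn_succ, List.prod_cons, Fin.prod_univ_succ]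
    exact eig_mul (h 0) (ih _ (fun i => μ i.succ) (fun i => h i.succ))

/-- **Irreducibility of points of the representation varieties `R_{g,n}` and `R'_{g,n}`.**
If `B_1, …, B_{2g}, C_1, …, C_n ∈ SU(2)` (with `n ≥ 1` odd) satisfy
`[B_1,B_{g+1}] ⋯ [B_g,B_{2g}] C_1 ⋯ C_n = ε·I` with `ε = ±1` and `C_i^2 = -1` for all `i`,
then the matrices `B_1, …, B_{2g}, C_1, …, C_n` admit no common eigenvector `0 ≠ v ∈ ℂ²`. -/
theorem no_common_eigenvector_of_traceless_punctured_surface_rep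
    (g n : ℕ) (hn : 1 ≤ n) (hodd : Odd n) (ε : ℂ) (hε : ε = 1 ∨ ε = -1)
    (B : Fin (g + g) → Matrix (Fin 2) (Fin 2) ℂ)
    (C : Fin n → Matrix (Fin 2) (Fin 2) ℂ)
    (hB : ∀ i, B i ∈ Matrix.specialUnitaryGroup (Fin 2) ℂ)
    (hC : ∀ j, C j ∈ Matrix.specialUnitaryGroup (Fin 2) ℂ)
    (hC2 : ∀ j, C j ^ 2 = -1)
    (hrel :
      (List.ofFn fun i : Fin g =>
          B (Fin.castAdd g i) * B (Fin.natAdd g i) *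
            (B (Fin.castAdd g i))⁻¹ * (B (Fin.natAdd g i))⁻¹).prod *
        (List.ofFn C).prod = ε • (1 : Matrix (Fin 2) (Fin 2) ℂ)) :
    ¬ ∃ v : Fin 2 → ℂ, v ≠ 0 ∧
        (∀ i, ∃ μ : ℂ, (B i).mulVec v = μ • v) ∧
        (∀ j, ∃ μ : ℂ, (C j).mulVec v = μ • v) := by
  rintro ⟨v, hv, hBe, hCe⟩
  -- eigenvalues
  choose μB hμB using hBe
  choose μC hμC using hCe
  have hBdet : ∀ i, IsUnit (B i).det := fun i => by
    rw [(Matrix.mem_specialUnitaryGroup_iff.mp (hB i)).2]; exact isUnit_one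
  -- commutator factors have eigenvalue 1
  have hcomm : ∀ i : Fin g,
      (B (Fin.castAdd g i) * B (Fin.natAdd g i) *
        (B (Fin.castAdd g i))⁻¹ * (B (Fin.natAdd g i))⁻¹).mulVec v
      = (1 : ℂ) • v := by
    intro i
    obtain ⟨ha1, hi1⟩ := eig_inv hv (hBdet (Fin.castAdd g i)) (hμB (Fin.castAdd g i))
    obtain ⟨ha2, hi2⟩ := eig_inv hv (hBdet (Fin.natAdd g i)) (hμB (Fin.natAdd g i))
    have := eig_mul (eig_mul (eig_mul (hμB (Fin.castAdd g i)) (hμB (Fin.natAdd g i))) hi1) hi2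
    rw [this]
    congr 1
    have h12 : ∀ a b : ℂ, a ≠ 0 → b ≠ 0 → a * b * a⁻¹ * b⁻¹ = 1 := by
      intro a b ha hb; field_simp
    exact h12 _ _ ha1 ha2
  have hM : (List.ofFn fun i : Fin g =>
      B (Fin.castAdd g i) * B (Fin.natAdd g i) *
        (B (Fin.castAdd g i))⁻¹ * (B (Fin.natAdd g i))⁻¹).prod.mulVec v
      = (1 : ℂ) • v := by
    rw [eig_ofFn_prod g _ (fun _ => (1 : ℂ)) hcomm]
    simp
  have hN : (List.ofFn C).prod.mulVec v = (∏ j, μC j) • v :=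
    eig_ofFn_prod n C μC hμC
  have htot := eig_mul hM hN
  rw [hrel] at htot
  have hεv : (ε • (1 : Matrix (Fin 2) (Fin 2) ℂ)).mulVec v = ε • v := by
    rw [Matrix.smul_mulVec, Matrix.one_mulVec]
  rw [hεv] at htot
  have heq : ε = 1 * ∏ j, μC j := eig_smul_cancel hv htot
  -- each μC j squares to -1
  have hsq : ∀ j, μC j ^ 2 = -1 := by
    intro j
    have h1 : (C j ^ 2).mulVec v = (μC j * μC j) • v := by
      rw [sq]; exact eig_mul (hμC j) (hμC j)
    rw [hC2 j] at h1
    have h2 : (-1 : Matrix (Fin 2) (Fin 2) ℂ).mulVec v = (-1 : ℂ) • v := by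
      simp [Matrix.neg_mulVec, Matrix.one_mulVec]
    rw [h2] at h1
    have := eig_smul_cancel hv h1
    rw [sq]; exact this.symm
  have hprodsq : (∏ j, μC j) ^ 2 = -1 := by
    rw [← Finset.prod_pow]
    simp only [hsq]
    rw [Finset.prod_const, Finset.card_univ, Fintype.card_fin]
    exact hodd.neg_one_pow
  have hε2 : ε ^ 2 = 1 := by rcases hε with rfl | rfl <;> norm_num
  rw [heq, one_mul, hprodsq] at hε2
  norm_num at hε2
end

section
/- Fix an integer m. In the polynomial ring ℂ[α, β, γ], graded by assigning the weights deg α = 2, deg β = 4, deg γ = 6, define polynomials ξ_k by ξ₀ = 1, ξ₁ = α, ξ₂ = α²/2 + (m−1)β/2, and, for k ≥ 2, ξ_{k+1} = (α·ξ_k + (m−k)·β·ξ_{k−1} − (γ/2)·ξ_{k−2})/(k+1). Then for every k ≥ 0 the polynomial ξ_k is weighted-homogeneous of total degree 2k, and the coefficient of the monomial α^k in ξ_k equals 1/k!. -/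
open MvPolynomial

/-- The polynomials `ξ_k ∈ ℂ[α, β, γ]` (variables `X 0 = α`, `X 1 = β`, `X 2 = γ`),
defined by `ξ₀ = 1`, `ξ₁ = α`, `ξ₂ = α²/2 + (m−1)β/2` and the recursion
`ξ_{k+3} = (α·ξ_{k+2} + (m−(k+2))·β·ξ_{k+1} − (γ/2)·ξ_k)/(k+3)`. -/
noncomputable def mumfordXi (m : ℤ) : ℕ → MvPolynomial (Fin 3) ℂ
  | 0 => 1
  | 1 => X 0
  | 2 => (2 : ℂ)⁻¹ • (X 0 ^ 2) + (((m : ℂ) - 1) / 2) • X 1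
  | (k + 3) =>
      ((k : ℂ) + 3)⁻¹ •
        (X 0 * mumfordXi m (k + 2)
          + ((m : ℂ) - ((k : ℂ) + 2)) • (X 1 * mumfordXi m (k + 1))
          - (2 : ℂ)⁻¹ • (X 2 * mumfordXi m k))

lemma MvPolynomial.IsWeightedHomogeneous.smul' {σ M : Type*} [AddCommMonoid M] {w : σ → M}
    {p : MvPolynomial σ ℂ} {n : M} (h : IsWeightedHomogeneous w p n) (c : ℂ) :
    IsWeightedHomogeneous w (c • p) n := fun d hd => by
  apply h
  intro h0
  exact hd (by simp [coeff_smul, h0])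

lemma MvPolynomial.IsWeightedHomogeneous.sub' {σ M : Type*} [AddCommMonoid M] {w : σ → M}
    {p q : MvPolynomial σ ℂ} {n : M} (hp : IsWeightedHomogeneous w p n)
    (hq : IsWeightedHomogeneous w q n) :
    IsWeightedHomogeneous w (p - q) n := by
  rw [sub_eq_add_neg]
  exact hp.add (by simpa using hq.smul' (-1))

/-- **Homogeneity and leading coefficient of the Mumford relation polynomials.**
Give `ℂ[α, β, γ]` the grading with `deg α = 2`, `deg β = 4`, `deg γ = 6`.  Then each `ξ_k`
is weighted-homogeneous of total degree `2k`, and the coefficient of `α^k` in `ξ_k`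
equals `1/k!`. -/
theorem mumfordXi_isWeightedHomogeneous_and_leadingCoeff (m : ℤ) (k : ℕ) :
    IsWeightedHomogeneous (![2, 4, 6] : Fin 3 → ℕ) (mumfordXi m k) (2 * k) ∧
      coeff (Finsupp.single (0 : Fin 3) k) (mumfordXi m k) = ((k.factorial : ℂ))⁻¹ := by
  induction k using Nat.strong_induction_on with
  | _ k ih =>
    have hX0 : IsWeightedHomogeneous (![2, 4, 6] : Fin 3 → ℕ) (X 0 : MvPolynomial (Fin 3) ℂ) 2 := by
      simpa using isWeightedHomogeneous_X (R := ℂ) (w := (![2, 4, 6] : Fin 3 → ℕ)) 0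
    have hX1 : IsWeightedHomogeneous (![2, 4, 6] : Fin 3 → ℕ) (X 1 : MvPolynomial (Fin 3) ℂ) 4 := by
      simpa using isWeightedHomogeneous_X (R := ℂ) (w := (![2, 4, 6] : Fin 3 → ℕ)) 1
    have hX2 : IsWeightedHomogeneous (![2, 4, 6] : Fin 3 → ℕ) (X 2 : MvPolynomial (Fin 3) ℂ) 6 := by
      simpa using isWeightedHomogeneous_X (R := ℂ) (w := (![2, 4, 6] : Fin 3 → ℕ)) 2
    match k with
    | 0 =>
      constructor
      · simpa [mumfordXi] using isWeightedHomogeneous_one (R := ℂ) (![2, 4, 6] : Fin 3 → ℕ)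
      · simp [mumfordXi]
    | 1 =>
      constructor
      · simpa [mumfordXi] using hX0
      · simp [mumfordXi]
    | 2 =>
      constructor
      · have := ((hX0.mul hX0).smul' (2 : ℂ)⁻¹).add
          ((hX1).smul' (((m : ℂ) - 1) / 2))
        simpa [mumfordXi, sq] using this
      · have h1 : coeff (Finsupp.single (0 : Fin 3) 2) (X 0 ^ 2 : MvPolynomial (Fin 3) ℂ) = 1 := by
          simp [coeff_X_pow]
        have h2 : coeff (Finsupp.single (0 : Fin 3) 2) (X 1 : MvPolynomial (Fin 3) ℂ) = 0 := by
          rw [coeff_X']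
          simp [Finsupp.single_eq_single_iff]
        simp only [mumfordXi, coeff_add, coeff_smul, h1, h2, smul_eq_mul, mul_one, mul_zero,
          add_zero]
        norm_num [Nat.factorial]
    | (n + 3) =>
      obtain ⟨h2h, h2c⟩ := ih (n + 2) (by omega)
      obtain ⟨h1h, h1c⟩ := ih (n + 1) (by omega)
      obtain ⟨h0h, h0c⟩ := ih n (by omega)
      constructor
      · have t0 : IsWeightedHomogeneous (![2, 4, 6] : Fin 3 → ℕ)
            (X 0 * mumfordXi m (n + 2)) (2 * (n + 3)) := by
          have := hX0.mul h2h
          convert this using 1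
          ring
        have t1 : IsWeightedHomogeneous (![2, 4, 6] : Fin 3 → ℕ)
            (X 1 * mumfordXi m (n + 1)) (2 * (n + 3)) := by
          have := hX1.mul h1h
          convert this using 1
          ring
        have t2 : IsWeightedHomogeneous (![2, 4, 6] : Fin 3 → ℕ)
            (X 2 * mumfordXi m n) (2 * (n + 3)) := by
          have := hX2.mul h0h
          convert this using 1
          ring
        have : IsWeightedHomogeneous (![2, 4, 6] : Fin 3 → ℕ)
            (X 0 * mumfordXi m (n + 2)
              + ((m : ℂ) - ((n : ℂ) + 2)) • (X 1 * mumfordXi m (n + 1))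
              - (2 : ℂ)⁻¹ • (X 2 * mumfordXi m n)) (2 * (n + 3)) :=
          (t0.add (t1.smul' _)).sub' (t2.smul' _)
        exact (this.smul' _)
      · have hs : Finsupp.single (0 : Fin 3) (n + 3)
            = Finsupp.single (0 : Fin 3) 1 + Finsupp.single (0 : Fin 3) (n + 2) := by
          rw [← Finsupp.single_add]
          congr 1
          omega
        have c0 : coeff (Finsupp.single (0 : Fin 3) (n + 3))
            (X 0 * mumfordXi m (n + 2)) = ((n + 2).factorial : ℂ)⁻¹ := by
          rw [hs, coeff_X_mul, h2c]
        have c1 : coeff (Finsupp.single (0 : Fin 3) (n + 3))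
            (X 1 * mumfordXi m (n + 1)) = 0 := by
          classical
          rw [coeff_X_mul']
          simp [Finsupp.single_apply]
        have c2 : coeff (Finsupp.single (0 : Fin 3) (n + 3))
            (X 2 * mumfordXi m n) = 0 := by
          classical
          rw [coeff_X_mul']
          simp [Finsupp.single_apply]
        simp only [mumfordXi, coeff_smul, coeff_sub, coeff_add, c0, c1, c2, smul_zero,
          smul_eq_mul, mul_zero, add_zero, sub_zero]
        rw [show ((n + 3).factorial : ℂ) = ((n : ℂ) + 3) * ((n + 2).factorial : ℂ) by
            rw [Nat.factorial_succ]; push_cast; ring, mul_inv]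
end

section
/- Let g ≥ 1 be an integer and work in the exterior algebra Λ(ℂ^{4g}) over ℂ, with the standard basis vectors of ℂ^{4g} labelled d_1, …, d_{2g}, ψ_1, …, ψ_{2g}. Set A := Σ_{j=1}^g d_j∧d_{j+g}, B := Σ_{j=1}^g (−d_j∧ψ_{j+g} + d_{j+g}∧ψ_j), γ := Σ_{j=1}^g ψ_j∧ψ_{j+g}, and ω := d_1∧d_{g+1}∧d_2∧d_{g+2}∧⋯∧d_g∧d_{2g}. Then for all nonnegative integers r, s: (i) if 2r + s = 2g, then s is necessarily even, say s = 2p, and (A^r/r!)∧(B^s/s!) = ω∧((−γ)^p/p!); (ii) if 2r + s > 2g, then A^r∧B^s = 0; (iii) if 2r + s < 2g, then in the unique expansion of (A^r/r!)∧(B^s/s!) as Σ_I d_I∧x_I over subsets I ⊆ {1,…,2g} (where d_I is the wedge of the corresponding d-generators and x_I lies in the subalgebra generated by ψ_1,…,ψ_{2g}), the coefficient of the monomial ω is 0. -/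
noncomputable section

namespace ZagierLemmaStmt

variable (g : ℕ)

/-- The exterior algebra `Λ(ℂ^{4g})` on generators `d_1,…,d_{2g},ψ_1,…,ψ_{2g}`:
the index `Sum.inl (Sum.inl j)` is `d_{j+1}`, `Sum.inl (Sum.inr j)` is `d_{g+j+1}`,
`Sum.inr (Sum.inl j)` is `ψ_{j+1}` and `Sum.inr (Sum.inr j)` is `ψ_{g+j+1}`. -/
abbrev Λ := ExteriorAlgebra ℂ (((Fin g ⊕ Fin g) ⊕ (Fin g ⊕ Fin g)) → ℂ)

/-- The generator `d_i`. -/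
def dgen (i : Fin g ⊕ Fin g) : Λ g :=
  ExteriorAlgebra.ι ℂ (Pi.single (Sum.inl i) 1)

/-- The generator `ψ_i`. -/
def psigen (i : Fin g ⊕ Fin g) : Λ g :=
  ExteriorAlgebra.ι ℂ (Pi.single (Sum.inr i) 1)

/-- For a subset `I ⊆ {1,…,2g}`, the wedge `d_I` of the corresponding `d`-generators, taken
in the interleaved order `d_1, d_{g+1}, d_2, d_{g+2}, …, d_g, d_{2g}`; in particular
`dWedge g Finset.univ = ω = d_1∧d_{g+1}∧⋯∧d_g∧d_{2g}`. -/
def dWedge (I : Finset (Fin g ⊕ Fin g)) : Λ g :=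
  (List.ofFn fun j : Fin g =>
    (if Sum.inl j ∈ I then dgen g (Sum.inl j) else 1) *
      (if Sum.inr j ∈ I then dgen g (Sum.inr j) else 1)).prod

/-- `A = Σ_{j=1}^g d_j ∧ d_{j+g}`. -/
def Aelem : Λ g := ∑ j : Fin g, dgen g (Sum.inl j) * dgen g (Sum.inr j)

/-- `B = Σ_{j=1}^g (−d_j ∧ ψ_{j+g} + d_{j+g} ∧ ψ_j)`. -/
def Belem : Λ g :=
  ∑ j : Fin g, (-(dgen g (Sum.inl j) * psigen g (Sum.inr j))
    + dgen g (Sum.inr j) * psigen g (Sum.inl j))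

/-- `γ = Σ_{j=1}^g ψ_j ∧ ψ_{j+g}`. -/
def gammaElem : Λ g := ∑ j : Fin g, psigen g (Sum.inl j) * psigen g (Sum.inr j)

/-- `ω = d_1∧d_{g+1}∧d_2∧d_{g+2}∧⋯∧d_g∧d_{2g}`. -/
def omegaElem : Λ g :=
  (List.ofFn fun j : Fin g => dgen g (Sum.inl j) * dgen g (Sum.inr j)).prod

/-! ### basic exterior algebra lemmas -/

variable {g}

abbrev Vg (g : ℕ) := ((Fin g ⊕ Fin g) ⊕ (Fin g ⊕ Fin g)) → ℂ

local notation "ιΛ" => ExteriorAlgebra.ι ℂ (M := Vg g)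

open ExteriorAlgebra CliffordAlgebra

lemma ι_swap (u v : Vg g) : ιΛ u * ιΛ v = -(ιΛ v * ιΛ u) :=
  eq_neg_of_add_eq_zero_left (ExteriorAlgebra.ι_add_mul_swap u v)

lemma ι_mul_involute (m : Vg g) (x : Λ g) : ιΛ m * x = involute x * ιΛ m := by
  induction x using ExteriorAlgebra.induction with
  | algebraMap r => rw [AlgHom.commutes]; exact (Algebra.commutes r _).symm
  | ι v => rw [involute_ι, ι_swap, neg_mul]
  | mul a b ha hb =>
      rw [← mul_assoc, ha, mul_assoc, hb, ← mul_assoc, map_mul]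
  | add a b ha hb => rw [mul_add, ha, hb, map_add, add_mul]

lemma mul_ι_involute (m : Vg g) (x : Λ g) : x * ιΛ m = ιΛ m * involute x := by
  have h := ι_mul_involute m (involute x)
  rw [involute_involute] at h
  exact h.symm

/-- products of two generators are central -/
lemma pair_central (u v : Vg g) (x : Λ g) : (ιΛ u * ιΛ v) * x = x * (ιΛ u * ιΛ v) := by
  rw [mul_assoc, ι_mul_involute v, ← mul_assoc, ι_mul_involute u, involute_involute, mul_assoc]

lemma pair_mul_same (u v w : Vg g) : (ιΛ u * ιΛ v) * (ιΛ u * ιΛ w) = 0 := by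
  have h : ιΛ v * ιΛ u = -(ιΛ u * ιΛ v) := ι_swap v u
  calc (ιΛ u * ιΛ v) * (ιΛ u * ιΛ w) = ιΛ u * (ιΛ v * ιΛ u) * ιΛ w := by
        rw [mul_assoc, mul_assoc, mul_assoc]
    _ = -(ιΛ u * ιΛ u * (ιΛ v * ιΛ w)) := by
        rw [h]; simp only [mul_neg, neg_mul, mul_assoc]
    _ = 0 := by rw [ι_sq_zero]; simp

lemma pair_mul_same' (u v w : Vg g) : (ιΛ u * ιΛ v) * (ιΛ v * ιΛ w) = 0 := by
  calc (ιΛ u * ιΛ v) * (ιΛ v * ιΛ w) = ιΛ u * (ιΛ v * ιΛ v) * ιΛ w := by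
        rw [mul_assoc, mul_assoc, mul_assoc]
    _ = 0 := by rw [ι_sq_zero]; simp

lemma pair_reorder (u v w z : Vg g) :
    (ιΛ u * ιΛ v) * (ιΛ w * ιΛ z) = -((ιΛ u * ιΛ w) * (ιΛ v * ιΛ z)) := by
  have h : ιΛ v * ιΛ w = -(ιΛ w * ιΛ v) := ι_swap v w
  calc (ιΛ u * ιΛ v) * (ιΛ w * ιΛ z) = ιΛ u * (ιΛ v * ιΛ w) * ιΛ z := by
        rw [mul_assoc, mul_assoc, mul_assoc]
    _ = -(ιΛ u * (ιΛ w * ιΛ v) * ιΛ z) := by rw [h]; simp only [mul_neg, neg_mul, mul_assoc]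
    _ = -((ιΛ u * ιΛ w) * (ιΛ v * ιΛ z)) := by rw [mul_assoc, mul_assoc, mul_assoc]

/-! ### Part B : prodL machinery and the structure theorem -/

open ExteriorAlgebra CliffordAlgebra
variable {g : ℕ}

abbrev psiAlg (g : ℕ) : Subalgebra ℂ (Λ g) := Algebra.adjoin ℂ (Set.range (psigen g))

lemma psigen_mem (i : Fin g ⊕ Fin g) : psigen g i ∈ psiAlg g :=
  Algebra.subset_adjoin ⟨i, rfl⟩

lemma involute_psiAlg {x : Λ g} (hx : x ∈ psiAlg g) : involute x ∈ psiAlg g := by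
  induction hx using Algebra.adjoin_induction with
  | mem x hx =>
      obtain ⟨i, rfl⟩ := hx
      rw [show involute (psigen g i) = -psigen g i from involute_ι _]
      exact neg_mem (psigen_mem i)
  | algebraMap r => rw [AlgHom.commutes]; exact algebraMap_mem _ r
  | add x y _ _ hx hy => rw [map_add]; exact add_mem hx hy
  | mul x y _ _ hx hy => rw [map_mul]; exact mul_mem hx hy

def prodL (I : Finset (Fin g ⊕ Fin g)) (l : List (Fin g ⊕ Fin g)) : Λ g :=
  (l.map fun i => if i ∈ I then dgen g i else 1).prod

@[simp] lemma prodL_nil (I : Finset (Fin g ⊕ Fin g)) : prodL I [] = 1 := rfl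

lemma prodL_cons (I : Finset (Fin g ⊕ Fin g)) (i : Fin g ⊕ Fin g) (t : List _) :
    prodL I (i :: t) = (if i ∈ I then dgen g i else 1) * prodL I t := by
  simp [prodL]

def ord (g : ℕ) : List (Fin g ⊕ Fin g) :=
  (List.finRange g).flatMap fun j => [Sum.inl j, Sum.inr j]

lemma mem_ord (i : Fin g ⊕ Fin g) : i ∈ ord g := by
  cases i <;> simp [ord, List.mem_flatMap]

lemma nodup_ord : (ord g).Nodup := by
  have : ∀ l : List (Fin g), l.Nodup →
      (l.flatMap fun j => [Sum.inl j, Sum.inr j] : List (Fin g ⊕ Fin g)).Nodup := by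
    intro l hl
    induction l with
    | nil => simp
    | cons j t ih =>
        rw [List.nodup_cons] at hl
        simp only [List.flatMap_cons, List.cons_append, List.nil_append, List.nodup_cons,
          List.mem_cons, List.mem_flatMap, List.mem_cons]
        refine ⟨?_, ?_, ih hl.2⟩
        · rintro (h | ⟨a, ha, (h | h | h)⟩) <;> simp_all
        · rintro ⟨a, ha, (h | h | h)⟩ <;> simp_all
  exact this _ (List.nodup_finRange g)

lemma mul_dgen_involute (i : Fin g ⊕ Fin g) (x : Λ g) :
    x * dgen g i = dgen g i * involute x := mul_ι_involute _ _

lemma length_ord : (ord g).length = 2 * g := by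
  have h : ∀ l : List (Fin g),
      (l.flatMap fun j => [Sum.inl j, Sum.inr j] : List (Fin g ⊕ Fin g)).length
        = 2 * l.length := by
    intro l
    induction l with
    | nil => simp
    | cons a t ih => simp [List.flatMap_cons, ih]; omega
  rw [ord, h, List.length_finRange]

lemma dWedge_eq_prodL (I : Finset (Fin g ⊕ Fin g)) : dWedge g I = prodL I (ord g) := by
  simp [dWedge, prodL, ord, List.ofFn_eq_map, List.flatMap_def, List.map_flatten,
    List.map_map, List.prod_flatten, Function.comp_def]

lemma prodL_one_of (I : Finset (Fin g ⊕ Fin g)) (l : List _) (h : ∀ i ∈ l, i ∉ I) :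
    prodL I l = 1 := by
  induction l with
  | nil => rfl
  | cons i t ih =>
      rw [prodL_cons, if_neg (h i (by simp)), one_mul]
      exact ih fun i hi => h i (by simp [hi])

lemma dWedge_empty : dWedge g ∅ = 1 := by
  rw [dWedge_eq_prodL]; exact prodL_one_of _ _ (by simp)

lemma prodL_single (i : Fin g ⊕ Fin g) (l : List _) (hn : l.Nodup) (hi : i ∈ l) :
    prodL {i} l = dgen g i := by
  induction l with
  | nil => simp at hi
  | cons a t ih =>
      rw [List.nodup_cons] at hn
      rw [prodL_cons]
      rcases List.mem_cons.1 hi with rfl | hi'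
      · rw [if_pos (Finset.mem_singleton_self _),
          prodL_one_of _ _ (fun b hb => by
            simp only [Finset.mem_singleton]; rintro rfl; exact hn.1 hb), mul_one]
      · rw [if_neg (by simp only [Finset.mem_singleton]; rintro rfl; exact hn.1 hi'), one_mul]
        exact ih hn.2 hi'

lemma dWedge_single (i : Fin g ⊕ Fin g) : dWedge g {i} = dgen g i := by
  rw [dWedge_eq_prodL]; exact prodL_single i _ nodup_ord (mem_ord i)

lemma involute_prodL (I : Finset (Fin g ⊕ Fin g)) (l : List _) :
    ∃ c : ℂ, involute (prodL I l) = c • prodL I l := by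
  induction l with
  | nil => exact ⟨1, by simp⟩
  | cons i t ih =>
      obtain ⟨c, hc⟩ := ih
      by_cases hi : i ∈ I
      · refine ⟨-c, ?_⟩
        rw [prodL_cons, if_pos hi, map_mul, hc,
          show involute (dgen g i) = -dgen g i from involute_ι _]
        rw [neg_mul, mul_smul_comm, neg_smul]
      · refine ⟨c, ?_⟩
        rw [prodL_cons, if_neg hi, map_mul, hc, map_one, mul_smul_comm]

lemma mul_prodL (l : List _) (I : Finset (Fin g ⊕ Fin g)) (x : Λ g) :
    ∃ x' : Λ g, x * prodL I l = prodL I l * x' ∧ (x ∈ psiAlg g → x' ∈ psiAlg g) := by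
  induction l generalizing x with
  | nil => exact ⟨x, by simp, fun h => h⟩
  | cons i t ih =>
      by_cases hi : i ∈ I
      · obtain ⟨x', hx', hmem⟩ := ih (involute x)
        refine ⟨x', ?_, fun h => hmem (involute_psiAlg h)⟩
        rw [prodL_cons, if_pos hi, ← mul_assoc, mul_dgen_involute, mul_assoc, hx', mul_assoc]
      · obtain ⟨x', hx', hmem⟩ := ih x
        exact ⟨x', by rw [prodL_cons, if_neg hi, one_mul, hx'], hmem⟩

lemma prodL_mul_prodL (l : List _) (I J : Finset (Fin g ⊕ Fin g)) :
    ∃ c : ℂ, prodL I l * prodL J l = c • prodL (I ∪ J) l := by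
  induction l with
  | nil => exact ⟨1, by simp⟩
  | cons i t ih =>
      obtain ⟨c, hc⟩ := ih
      obtain ⟨ε, hε⟩ : ∃ ε : ℂ, prodL I t * (if i ∈ J then dgen g i else 1)
          = ε • ((if i ∈ J then dgen g i else 1) * prodL I t) := by
        by_cases hj : i ∈ J
        · obtain ⟨ε, hε⟩ := involute_prodL I t
          exact ⟨ε, by rw [if_pos hj, mul_dgen_involute, hε, mul_smul_comm]⟩
        · exact ⟨1, by rw [if_neg hj, mul_one, one_mul, one_smul]⟩
      have key : prodL I (i :: t) * prodL J (i :: t)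
          = ε • (((if i ∈ I then dgen g i else 1) * (if i ∈ J then dgen g i else 1))
              * (prodL I t * prodL J t)) := by
        rw [prodL_cons, prodL_cons, mul_assoc, ← mul_assoc (prodL I t), hε]
        simp only [smul_mul_assoc, mul_smul_comm, mul_assoc]
      by_cases hI : i ∈ I <;> by_cases hJ : i ∈ J
      · refine ⟨0, ?_⟩
        rw [key, if_pos hI, if_pos hJ, show dgen g i * dgen g i = 0 from ι_sq_zero _]
        simp
      · refine ⟨ε * c, ?_⟩
        rw [key, if_pos hI, if_neg hJ, mul_one, hc, prodL_cons,
          if_pos (Finset.mem_union_left _ hI), mul_smul_comm, smul_smul]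
      · refine ⟨ε * c, ?_⟩
        rw [key, if_neg hI, if_pos hJ, one_mul, hc, prodL_cons,
          if_pos (Finset.mem_union_right _ hJ), mul_smul_comm, smul_smul]
      · refine ⟨ε * c, ?_⟩
        rw [key, if_neg hI, if_neg hJ, one_mul, one_mul, hc, prodL_cons,
          if_neg (by simp [hI, hJ]), one_mul, smul_smul]

/-! ### Part C : the structure theorem -/

def GoodSet (y : Λ g) : Prop :=
  ∃ x : Finset (Fin g ⊕ Fin g) → Λ g,
    (∀ I, x I ∈ psiAlg g) ∧ y = ∑ I : Finset (Fin g ⊕ Fin g), dWedge g I * x I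

lemma good_single (K : Finset (Fin g ⊕ Fin g)) (w : Λ g) (hw : w ∈ psiAlg g) :
    GoodSet (dWedge g K * w) := by
  refine ⟨fun I => if I = K then w else 0, fun I => ?_, ?_⟩
  · dsimp only; split
    · exact hw
    · exact zero_mem _
  · rw [Finset.sum_eq_single_of_mem K (Finset.mem_univ K)]
    · simp
    · intro I _ hne; simp [hne]

lemma good_psi (w : Λ g) (hw : w ∈ psiAlg g) : GoodSet w := by
  have := good_single ∅ w hw
  rwa [dWedge_empty, one_mul] at this

lemma good_zero : GoodSet (0 : Λ g) := by
  simpa using good_psi 0 (zero_mem _)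

lemma good_add {y z : Λ g} (hy : GoodSet y) (hz : GoodSet z) : GoodSet (y + z) := by
  obtain ⟨x, hx, rfl⟩ := hy
  obtain ⟨x', hx', rfl⟩ := hz
  exact ⟨fun I => x I + x' I, fun I => add_mem (hx I) (hx' I),
    by rw [← Finset.sum_add_distrib]; simp [mul_add]⟩

lemma good_smul (c : ℂ) {y : Λ g} (hy : GoodSet y) : GoodSet (c • y) := by
  obtain ⟨x, hx, rfl⟩ := hy
  exact ⟨fun I => c • x I, fun I => SMulMemClass.smul_mem c (hx I),
    by rw [Finset.smul_sum]; simp [mul_smul_comm]⟩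

lemma good_sum {ι : Type*} (s : Finset ι) (f : ι → Λ g) (h : ∀ i ∈ s, GoodSet (f i)) :
    GoodSet (∑ i ∈ s, f i) := by
  classical
  induction s using Finset.induction_on with
  | empty => simpa using good_zero
  | @insert _ _ hni ih =>
      rw [Finset.sum_insert hni]
      exact good_add (h _ (Finset.mem_insert_self _ _))
        (ih fun i hi => h i (Finset.mem_insert_of_mem hi))

lemma structure_theorem (y : Λ g) : GoodSet y := by
  induction y using ExteriorAlgebra.induction with
  | algebraMap r =>
      have := good_single ∅ (algebraMap ℂ (Λ g) r) (algebraMap_mem _ r)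
      rwa [dWedge_empty, one_mul] at this
  | ι m =>
      have hm : ExteriorAlgebra.ι ℂ m
          = ∑ i : Fin g ⊕ Fin g, m (Sum.inl i) • dgen g i
            + ∑ i : Fin g ⊕ Fin g, m (Sum.inr i) • psigen g i := by
        have h1 : m = ∑ t : (Fin g ⊕ Fin g) ⊕ (Fin g ⊕ Fin g), Pi.single t (m t) :=
          (Finset.univ_sum_single m).symm
        have h2 : ∀ (t : (Fin g ⊕ Fin g) ⊕ (Fin g ⊕ Fin g)) (c : ℂ),
            Pi.single t c = c • (Pi.single t 1 : Vg g) := by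
          intro t c
          funext j
          by_cases h : t = j <;> simp [Pi.single_apply, h]
        conv_lhs => rw [h1]
        rw [map_sum, Fintype.sum_sum_type]
        congr 1
        · exact Finset.sum_congr rfl fun i _ => by rw [h2, map_smul]; rfl
        · exact Finset.sum_congr rfl fun i _ => by rw [h2, map_smul]; rfl
      rw [hm]
      refine good_add (good_sum _ _ fun i _ => good_smul _ ?_)
        (good_psi _ (sum_mem fun i _ => SMulMemClass.smul_mem _ (psigen_mem i)))
      have := good_single {i} 1 (one_mem _)
      rwa [dWedge_single, mul_one] at this
  | mul a b ha hb =>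
      obtain ⟨x, hx, rfl⟩ := ha
      obtain ⟨z, hz, rfl⟩ := hb
      rw [Finset.sum_mul_sum]
      refine good_sum _ _ fun I _ => good_sum _ _ fun J _ => ?_
      obtain ⟨x', hx'1, hx'2⟩ := mul_prodL (ord g) J (x I)
      obtain ⟨c, hc⟩ := prodL_mul_prodL (ord g) I J
      have key : dWedge g I * x I * (dWedge g J * z J)
          = c • (dWedge g (I ∪ J) * (x' * z J)) := by
        simp only [dWedge_eq_prodL]
        calc prodL I (ord g) * x I * (prodL J (ord g) * z J)
            = prodL I (ord g) * (x I * prodL J (ord g)) * z J := by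
              simp only [mul_assoc]
          _ = prodL I (ord g) * (prodL J (ord g) * x') * z J := by rw [hx'1]
          _ = prodL I (ord g) * prodL J (ord g) * (x' * z J) := by
              simp only [mul_assoc]
          _ = c • (prodL (I ∪ J) (ord g) * (x' * z J)) := by
              rw [hc, smul_mul_assoc]
      rw [key]
      exact good_smul _ (good_single _ _ (mul_mem (hx'2 (hx I)) (hz J)))
  | add a b ha hb => exact good_add ha hb


/-! ### Part D : contraction machinery -/

def DVec (w : Vg g) : Prop := ∀ i : Fin g ⊕ Fin g, w (Sum.inr i) = 0

def PVec (w : Vg g) : Prop := ∀ i : Fin g ⊕ Fin g, w (Sum.inl i) = 0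

open Classical in
/-- number of `d`-type vectors in a list -/
noncomputable def dcount (l : List (Vg g)) : ℕ := l.countP fun w => decide (DVec w)

open Classical in
lemma dcount_cons (w : Vg g) (l : List (Vg g)) :
    dcount (w :: l) = dcount l + if DVec w then 1 else 0 := by
  rw [dcount, List.countP_cons, dcount]
  congr 1
  split <;> simp_all

lemma dcount_append (l₁ l₂ : List (Vg g)) : dcount (l₁ ++ l₂) = dcount l₁ + dcount l₂ :=
  List.countP_append

/-- the span of products of generators with at most `m` `d`-type factors -/
def Mgr (g m : ℕ) : Submodule ℂ (Λ g) :=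
  Submodule.span ℂ { x | ∃ l : List (Vg g),
    (∀ w ∈ l, DVec w ∨ PVec w) ∧ dcount l ≤ m ∧ x = (l.map (ExteriorAlgebra.ι ℂ)).prod }

lemma Mgr_mono {m m' : ℕ} (h : m ≤ m') : Mgr g m ≤ Mgr g m' :=
  Submodule.span_mono fun x ⟨l, h1, h2, h3⟩ => ⟨l, h1, h2.trans h, h3⟩

lemma one_mem_Mgr (m : ℕ) : (1 : Λ g) ∈ Mgr g m :=
  Submodule.subset_span ⟨[], by simp, by simp [dcount, List.countP_nil], by simp⟩

lemma Mgr_mul {m m' : ℕ} {x y : Λ g} (hx : x ∈ Mgr g m) (hy : y ∈ Mgr g m') :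
    x * y ∈ Mgr g (m + m') := by
  have : Mgr g m * Mgr g m' ≤ Mgr g (m + m') := by
    rw [Mgr, Mgr, Submodule.span_mul_span]
    refine Submodule.span_le.2 ?_
    rintro z ⟨x, ⟨l₁, ha1, ha2, rfl⟩, y, ⟨l₂, hb1, hb2, rfl⟩, rfl⟩
    refine Submodule.subset_span ⟨l₁ ++ l₂, ?_, ?_, by rw [List.map_append, List.prod_append]⟩
    · intro w hw; rcases List.mem_append.1 hw with h | h; exacts [ha1 w h, hb1 w h]
    · rw [dcount_append]; omega
  exact this (Submodule.mul_mem_mul hx hy)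

lemma ι_mul_Mgr_psi {w : Vg g} (hw : PVec w) {m : ℕ} {x : Λ g} (hx : x ∈ Mgr g m) :
    ExteriorAlgebra.ι ℂ w * x ∈ Mgr g m := by
  by_cases h : DVec w
  · have hw0 : w = 0 := by
      funext t
      cases t with
      | inl i => exact hw i
      | inr i => exact h i
    rw [hw0, map_zero, zero_mul]
    exact zero_mem _
  · have h1 : ExteriorAlgebra.ι ℂ w ∈ Mgr g 0 :=
      Submodule.subset_span ⟨[w], fun u hu => by simp_all,
        by simp [dcount_cons, dcount, List.countP_nil, h], by simp⟩
    simpa using Mgr_mul h1 hx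

lemma ι_mul_Mgr_d {w : Vg g} (hw : DVec w ∨ PVec w) {m : ℕ} {x : Λ g} (hx : x ∈ Mgr g m) :
    ExteriorAlgebra.ι ℂ w * x ∈ Mgr g (m + 1) := by
  have h1 : ExteriorAlgebra.ι ℂ w ∈ Mgr g 1 :=
    Submodule.subset_span ⟨[w], fun u hu => by simp_all,
      by by_cases h : DVec w <;> simp [dcount_cons, dcount, List.countP_nil, h], by simp⟩
  have := Mgr_mul h1 hx
  rwa [add_comm] at this

/-- the dual vector extracting the coefficient of `d_i` -/
def phiD (i : Fin g ⊕ Fin g) : Module.Dual ℂ (Vg g) := LinearMap.proj (Sum.inl i)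

/-- contraction by `phiD i` -/
noncomputable def ctr (i : Fin g ⊕ Fin g) : Λ g →ₗ[ℂ] Λ g :=
  CliffordAlgebra.contractLeft (Q := (0 : QuadraticForm ℂ (Vg g))) (phiD i)

lemma ctr_ι_mul (i : Fin g ⊕ Fin g) (w : Vg g) (x : Λ g) :
    ctr i (ExteriorAlgebra.ι ℂ w * x) = w (Sum.inl i) • x - ExteriorAlgebra.ι ℂ w * ctr i x :=
  CliffordAlgebra.contractLeft_ι_mul (Q := (0 : QuadraticForm ℂ (Vg g))) (phiD i) w x

lemma ctr_one (i : Fin g ⊕ Fin g) : ctr i (1 : Λ g) = 0 :=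
  CliffordAlgebra.contractLeft_one _ _

/-! ### Part D2 : contractions kill low `d`-degree elements -/

lemma ctr_gen_zero (i : Fin g ⊕ Fin g) (l : List (Vg g)) (hl : ∀ w ∈ l, DVec w ∨ PVec w)
    (hc : dcount l = 0) : ctr i ((l.map (ExteriorAlgebra.ι ℂ)).prod) = 0 := by
  induction l with
  | nil => simpa using ctr_one i
  | cons w t ih =>
      rw [dcount_cons] at hc
      have hw : ¬ DVec w ∨ w = 0 := by
        by_cases h : DVec w
        · refine Or.inr ?_
          exfalso; simp [h] at hc
        · exact Or.inl h
      have hwP : PVec w := by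
        rcases hl w (by simp) with h | h
        · rcases hw with h' | rfl
          · exact absurd h h'
          · intro j; rfl
        · exact h
      rw [List.map_cons, List.prod_cons, ctr_ι_mul, hwP i, zero_smul, zero_sub,
        ih (fun u hu => hl u (by simp [hu])) (by omega)]
      simp

lemma ctr_gen (i : Fin g ⊕ Fin g) :
    ∀ (m : ℕ) (l : List (Vg g)), (∀ w ∈ l, DVec w ∨ PVec w) → dcount l ≤ m + 1 →
      ctr i ((l.map (ExteriorAlgebra.ι ℂ)).prod) ∈ Mgr g m := by
  intro m
  induction m with
  | zero =>
      intro l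
      induction l with
      | nil =>
          intro _ _
          rw [List.map_nil, List.prod_nil, ctr_one]
          exact zero_mem _
      | cons w t ih =>
          intro hl hc
          rw [dcount_cons] at hc
          rw [List.map_cons, List.prod_cons, ctr_ι_mul, sub_eq_add_neg]
          by_cases hD : DVec w
          · rw [if_pos hD] at hc
            refine add_mem (Submodule.smul_mem _ _ (Submodule.subset_span
              ⟨t, fun u hu => hl u (by simp [hu]), by omega, rfl⟩)) (neg_mem ?_)
            rw [ctr_gen_zero i t (fun u hu => hl u (by simp [hu])) (by omega), mul_zero]
            exact zero_mem _
          · have hP : PVec w := (hl w (by simp)).resolve_left hD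
            rw [if_neg hD] at hc
            rw [hP i, zero_smul]
            refine add_mem (zero_mem _) (neg_mem ?_)
            exact ι_mul_Mgr_psi hP (ih (fun u hu => hl u (by simp [hu])) (by omega))
  | succ m ihm =>
      intro l
      induction l with
      | nil =>
          intro _ _
          rw [List.map_nil, List.prod_nil, ctr_one]
          exact zero_mem _
      | cons w t ih =>
          intro hl hc
          rw [dcount_cons] at hc
          rw [List.map_cons, List.prod_cons, ctr_ι_mul, sub_eq_add_neg]
          by_cases hD : DVec w
          · rw [if_pos hD] at hc
            refine add_mem (Submodule.smul_mem _ _ (Submodule.subset_span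
              ⟨t, fun u hu => hl u (by simp [hu]), by omega, rfl⟩)) (neg_mem ?_)
            exact ι_mul_Mgr_d (hl w (by simp))
              (ihm t (fun u hu => hl u (by simp [hu])) (by omega))
          · have hP : PVec w := (hl w (by simp)).resolve_left hD
            rw [if_neg hD] at hc
            rw [hP i, zero_smul]
            refine add_mem (zero_mem _) (neg_mem ?_)
            exact ι_mul_Mgr_psi hP (ih (fun u hu => hl u (by simp [hu])) (by omega))

lemma ctr_M0 (i : Fin g ⊕ Fin g) {x : Λ g} (hx : x ∈ Mgr g 0) : ctr i x = 0 := by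
  induction hx using Submodule.span_induction with
  | mem x hx =>
      obtain ⟨l, h1, h2, rfl⟩ := hx
      exact ctr_gen_zero i l h1 (Nat.le_zero.1 h2)
  | zero => simp
  | add x y _ _ hx hy => rw [map_add, hx, hy, add_zero]
  | smul c x _ hx => rw [map_smul, hx, smul_zero]

lemma ctr_M (i : Fin g ⊕ Fin g) {m : ℕ} {x : Λ g} (hx : x ∈ Mgr g (m + 1)) :
    ctr i x ∈ Mgr g m := by
  induction hx using Submodule.span_induction with
  | mem x hx =>
      obtain ⟨l, h1, h2, rfl⟩ := hx
      exact ctr_gen i m l h1 h2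
  | zero => rw [map_zero]; exact zero_mem _
  | add x y _ _ hx hy => rw [map_add]; exact add_mem hx hy
  | smul c x _ hx => rw [map_smul]; exact Submodule.smul_mem _ _ hx

/-- iterated contraction along a list of indices (head applied first) -/
noncomputable def CTl : List (Fin g ⊕ Fin g) → Λ g →ₗ[ℂ] Λ g
  | [] => LinearMap.id
  | i :: t => (CTl t).comp (ctr i)

lemma CTl_nil (x : Λ g) : CTl [] x = x := rfl

lemma CTl_cons (i : Fin g ⊕ Fin g) (t : List _) (x : Λ g) :
    CTl (i :: t) x = CTl t (ctr i x) := rfl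

lemma CTl_zero_of_Mgr (l : List (Fin g ⊕ Fin g)) (m : ℕ) (x : Λ g)
    (hx : x ∈ Mgr g m) (hlen : m + 1 ≤ l.length) : CTl l x = 0 := by
  induction l generalizing m x with
  | nil => simp at hlen
  | cons i t ih =>
      rw [CTl_cons]
      cases m with
      | zero => rw [ctr_M0 i hx, map_zero]
      | succ m =>
          exact ih m _ (ctr_M i hx) (by simpa using hlen)

/-- the `ψ`-subalgebra sits inside `Mgr g 0` -/
lemma psiAlg_le_Mgr0 : (psiAlg g : Set (Λ g)) ⊆ (Mgr g 0 : Set (Λ g)) := by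
  intro x hx
  have : psiAlg g ≤ ((Mgr g 0).toSubalgebra (one_mem_Mgr 0)
      (fun x y hx hy => by simpa using Mgr_mul hx hy)) := by
    refine Algebra.adjoin_le ?_
    rintro _ ⟨i, rfl⟩
    refine Submodule.subset_span ⟨[Pi.single (Sum.inr i) 1], ?_, ?_, by simp [psigen]⟩
    · intro w hw
      simp only [List.mem_singleton] at hw
      subst hw
      refine Or.inr fun j => ?_
      simp [Pi.single_apply]
    · have : ¬ DVec (Pi.single (Sum.inr i) (1:ℂ) : Vg g) := by
        intro h
        simpa using h i
      simp [dcount_cons, dcount, List.countP_nil, this]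
  exact this hx

lemma ctr_psi_zero (i : Fin g ⊕ Fin g) {x : Λ g} (hx : x ∈ psiAlg g) : ctr i x = 0 :=
  ctr_M0 i (psiAlg_le_Mgr0 hx)

lemma ctr_prodL_mul_zero (i : Fin g ⊕ Fin g) (t : List (Fin g ⊕ Fin g))
    (I : Finset (Fin g ⊕ Fin g)) {x : Λ g} (hi : i ∉ t) (hx : x ∈ psiAlg g) :
    ctr i (prodL I t * x) = 0 := by
  induction t with
  | nil => rw [prodL_nil, one_mul]; exact ctr_psi_zero i hx
  | cons a t' ih =>
      have hia : i ∉ t' := fun h => hi (by simp [h])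
      have hne : a ≠ i := fun h => hi (by simp [h])
      by_cases ha : a ∈ I
      · rw [prodL_cons, if_pos ha, mul_assoc, dgen, ctr_ι_mul]
        have : (Pi.single (Sum.inl a) (1:ℂ) : Vg g) (Sum.inl i) = 0 := by
          simp [Pi.single_apply, hne]
        rw [this, zero_smul, zero_sub, ih hia, mul_zero, neg_zero]
      · rw [prodL_cons, if_neg ha, one_mul]
        exact ih hia

lemma CTl_prodL (l : List (Fin g ⊕ Fin g)) (hn : l.Nodup) (I : Finset (Fin g ⊕ Fin g))
    {x : Λ g} (hx : x ∈ psiAlg g) :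
    CTl l (prodL I l * x) = @ite _ (∀ i ∈ l, i ∈ I) (Classical.propDecidable _) x 0 := by
  induction l with
  | nil => simp [CTl_nil]
  | cons i t ih =>
      rw [List.nodup_cons] at hn
      rw [CTl_cons]
      by_cases hi : i ∈ I
      · rw [prodL_cons, if_pos hi, mul_assoc, dgen, ctr_ι_mul]
        rw [Pi.single_eq_same, one_smul, ctr_prodL_mul_zero i t I hn.1 hx, mul_zero, sub_zero, ih hn.2]
        rcases Classical.em (∀ a ∈ t, a ∈ I) with ht | ht
        · rw [if_pos ht, if_pos (show ∀ a ∈ i :: t, a ∈ I from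
            fun a ha => (List.mem_cons.1 ha).elim (fun h => h ▸ hi) (fun h => ht a h))]
        · rw [if_neg ht,
            if_neg (fun h => ht fun a ha => h a (List.mem_cons_of_mem _ ha))]
      · rw [prodL_cons, if_neg hi, one_mul, ctr_prodL_mul_zero i t I hn.1 hx, map_zero,
          if_neg (by intro h; exact hi (h i (by simp)))]

lemma CT_dWedge_mul (I : Finset (Fin g ⊕ Fin g)) {x : Λ g} (hx : x ∈ psiAlg g) :
    CTl (ord g) (dWedge g I * x) = if I = Finset.univ then x else 0 := by
  rw [dWedge_eq_prodL, CTl_prodL (ord g) nodup_ord I hx]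
  by_cases h : I = Finset.univ
  · rw [if_pos (fun i _ => h ▸ Finset.mem_univ i), if_pos h]
  · rw [if_neg (fun hh => h (Finset.eq_univ_of_forall fun i => hh i (mem_ord i))), if_neg h]

lemma CT_expansion (x : Finset (Fin g ⊕ Fin g) → Λ g) (hx : ∀ I, x I ∈ psiAlg g) :
    CTl (ord g) (∑ I : Finset (Fin g ⊕ Fin g), dWedge g I * x I) = x Finset.univ := by
  rw [map_sum]
  rw [Finset.sum_congr rfl fun I _ => CT_dWedge_mul I (hx I)]
  simp

/-! ### Part E : elementary symmetric expansion of powers of sums of square-zero elements -/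

lemma esymm_pow {R : Type*} [CommRing R] {ι : Type*} [DecidableEq ι] (x : ι → R)
    (s : Finset ι) (hx : ∀ j ∈ s, x j * x j = 0) :
    ∀ r : ℕ, (∑ j ∈ s, x j) ^ r = r.factorial • ∑ S ∈ s.powersetCard r, ∏ j ∈ S, x j := by
  classical
  induction s using Finset.induction_on with
  | empty =>
      intro r
      cases r with
      | zero => simp
      | succ n =>
          rw [Finset.powersetCard_eq_empty.2 (by simp)]
          simp [zero_pow]
  | @insert i s hi ih =>
      have hx' : ∀ j ∈ s, x j * x j = 0 := fun j hj => hx j (Finset.mem_insert_of_mem hj)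
      have hxi : x i * x i = 0 := hx i (Finset.mem_insert_self i s)
      intro r
      rw [Finset.sum_insert hi]
      cases r with
      | zero => simp
      | succ n =>
          rw [add_pow]
          have hsub : ({0, 1} : Finset ℕ) ⊆ Finset.range (n + 1 + 1) := by
            intro k hk
            simp only [Finset.mem_insert, Finset.mem_singleton] at hk
            rcases hk with rfl | rfl <;> simp [Finset.mem_range] <;> omega
          have hzero : ∀ k ∈ Finset.range (n + 1 + 1), k ∉ ({0, 1} : Finset ℕ) →
              x i ^ k * (∑ j ∈ s, x j) ^ (n + 1 - k) * (n + 1).choose k = 0 := by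
            intro k _ hk
            simp only [Finset.mem_insert, Finset.mem_singleton] at hk
            push_neg at hk
            have h2 : 2 ≤ k := by omega
            have : x i ^ k = 0 := by
              calc x i ^ k = x i * x i * x i ^ (k - 2) := by
                    rw [← pow_two, ← pow_add]; congr 1; omega
                _ = 0 := by rw [hxi, zero_mul]
            rw [this, zero_mul, zero_mul]
          rw [← Finset.sum_subset hsub hzero, Finset.sum_pair (by omega : (0:ℕ) ≠ 1)]
          have hinj : ∀ S ∈ s.powersetCard n, ∀ S' ∈ s.powersetCard n,
              insert i S = insert i S' → S = S' := by
            intro S hS S' hS' h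
            have hiS : i ∉ S := fun hmem => hi ((Finset.mem_powersetCard.1 hS).1 hmem)
            have hiS' : i ∉ S' := fun hmem => hi ((Finset.mem_powersetCard.1 hS').1 hmem)
            rw [← Finset.erase_insert hiS, ← Finset.erase_insert hiS', h]
          have hdisj : Disjoint (s.powersetCard (n + 1))
              ((s.powersetCard n).image (insert i)) := by
            rw [Finset.disjoint_left]
            intro T hT hT'
            obtain ⟨S, _, rfl⟩ := Finset.mem_image.1 hT'
            exact hi ((Finset.mem_powersetCard.1 hT).1 (Finset.mem_insert_self i S))
          rw [Finset.powersetCard_succ_insert hi, Finset.sum_union hdisj,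
            Finset.sum_image hinj]
          have hprodins : ∑ S ∈ s.powersetCard n, ∏ j ∈ insert i S, x j
              = x i * ∑ S ∈ s.powersetCard n, ∏ j ∈ S, x j := by
            rw [Finset.mul_sum]
            refine Finset.sum_congr rfl fun S hS => ?_
            exact Finset.prod_insert fun hmem => hi ((Finset.mem_powersetCard.1 hS).1 hmem)
          simp only [Nat.sub_zero, Nat.add_sub_cancel]
          rw [hprodins, ih hx' n, ih hx' (n + 1)]
          simp only [nsmul_eq_mul, pow_zero, one_mul, Nat.choose_zero_right, Nat.cast_one,
            mul_one, pow_one, Nat.choose_one_right, Nat.factorial_succ, Nat.cast_mul,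
            Nat.cast_add, Nat.cast_one, Nat.sub_zero]
          ring

/-! ### Part F : the commutative core -/



def aE (j : Fin g) : Λ g := dgen g (Sum.inl j) * dgen g (Sum.inr j)

def bE : Fin g × Bool → Λ g
  | (j, true) => -(dgen g (Sum.inl j) * psigen g (Sum.inr j))
  | (j, false) => dgen g (Sum.inr j) * psigen g (Sum.inl j)

def cE (j : Fin g) : Λ g := psigen g (Sum.inl j) * psigen g (Sum.inr j)

variable (g) in
def genSet : Set (Λ g) := (Set.range aE ∪ Set.range bE) ∪ Set.range cE

lemma genSet_central : ∀ x ∈ genSet g, ∀ y : Λ g, x * y = y * x := by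
  rintro x ((⟨j, rfl⟩ | ⟨w, rfl⟩) | ⟨j, rfl⟩) y
  · exact pair_central _ _ y
  · rcases w with ⟨j, b⟩
    cases b
    · simp only [bE, dgen, psigen]
      exact pair_central _ _ y
    · simp only [bE, dgen, psigen]
      rw [neg_mul, pair_central _ _ y, mul_neg]
  · exact pair_central _ _ y

variable (g) in
def Kalg : Subalgebra ℂ (Λ g) := Algebra.adjoin ℂ (genSet g)

variable (g) in
def KR : Type := Kalg g

noncomputable instance : CommRing (KR g) :=
  Algebra.adjoinCommRingOfComm ℂ fun a ha b _ => genSet_central a ha b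

noncomputable instance : Algebra ℂ (KR g) := (Kalg g).algebra

variable (g) in
noncomputable def valK : KR g →ₐ[ℂ] Λ g := Subalgebra.val (Kalg g)

lemma valK_injective : Function.Injective (valK g) := Subtype.val_injective

def aK (j : Fin g) : KR g :=
  ⟨aE j, Algebra.subset_adjoin (Or.inl (Or.inl ⟨j, rfl⟩))⟩

def bK (w : Fin g × Bool) : KR g :=
  ⟨bE w, Algebra.subset_adjoin (Or.inl (Or.inr ⟨w, rfl⟩))⟩

def cK (j : Fin g) : KR g :=
  ⟨cE j, Algebra.subset_adjoin (Or.inr ⟨j, rfl⟩)⟩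

@[simp] lemma valK_aK (j : Fin g) : valK g (aK j) = aE j := rfl
@[simp] lemma valK_bK (w : Fin g × Bool) : valK g (bK w) = bE w := rfl
@[simp] lemma valK_cK (j : Fin g) : valK g (cK j) = cE j := rfl
@[simp] lemma valK_mul (x y : KR g) : valK g (x * y) = valK g x * valK g y := rfl
@[simp] lemma valK_zero : valK g (0 : KR g) = 0 := rfl

/- relations in `Λ` -/

lemma aE_sq (j : Fin g) : aE j * aE j = 0 := by
  simp only [aE, dgen]
  exact pair_mul_same _ _ _

lemma cE_sq (j : Fin g) : cE j * cE j = 0 := by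
  simp only [cE, psigen]
  exact pair_mul_same _ _ _

lemma bE_sq (w : Fin g × Bool) : bE w * bE w = 0 := by
  rcases w with ⟨j, b⟩
  cases b
  · simp only [bE, dgen, psigen]
    exact pair_mul_same _ _ _
  · simp only [bE, dgen, psigen, neg_mul, mul_neg, neg_neg]
    exact pair_mul_same _ _ _

lemma aE_mul_bE (j : Fin g) (b : Bool) : aE j * bE (j, b) = 0 := by
  cases b
  · simp only [aE, bE, dgen, psigen]
    exact pair_mul_same' _ _ _
  · simp only [aE, bE, dgen, psigen, mul_neg]
    rw [pair_mul_same, neg_zero]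

lemma bE_mul_bE (j : Fin g) : bE (j, true) * bE (j, false) = -(aE j * cE j) := by
  simp only [aE, bE, cE, dgen, psigen]
  rw [neg_mul, pair_reorder, neg_neg,
    ι_swap (Pi.single (Sum.inr (Sum.inr j)) 1) (Pi.single (Sum.inr (Sum.inl j)) 1), mul_neg]

/- relations in `K` -/

lemma aK_sq (j : Fin g) : aK j * aK j = 0 := valK_injective (by simp [aE_sq j])

lemma cK_sq (j : Fin g) : cK j * cK j = 0 := valK_injective (by simp [cE_sq j])

lemma negcK_sq (j : Fin g) : (-cK j) * (-cK j) = 0 := by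
  rw [neg_mul_neg]; exact cK_sq j

lemma bK_sq (w : Fin g × Bool) : bK w * bK w = 0 := valK_injective (by simp [bE_sq w])

lemma aK_mul_bK (j : Fin g) (b : Bool) : aK j * bK (j, b) = 0 :=
  valK_injective (by simp [aE_mul_bE j b])

lemma bK_mul_bK (j : Fin g) : bK (j, true) * bK (j, false) = -(aK j * cK j) :=
  valK_injective (by simp only [valK_mul, map_neg, valK_aK, valK_cK, valK_bK]; exact bE_mul_bE j)

variable (g) in
noncomputable def AK : KR g := ∑ j : Fin g, aK j
variable (g) in
noncomputable def BK : KR g := ∑ w : Fin g × Bool, bK w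
variable (g) in
noncomputable def GK : KR g := ∑ j : Fin g, cK j
variable (g) in
noncomputable def omegaK : KR g := ∏ j : Fin g, aK j

lemma val_AK : valK g (AK g) = Aelem g := by
  rw [AK, map_sum]; rfl

lemma val_BK : valK g (BK g) = Belem g := by
  rw [BK, map_sum, Fintype.sum_prod_type]
  rw [Belem]
  refine Finset.sum_congr rfl fun j _ => ?_
  rw [Fintype.sum_bool]
  rfl

lemma val_GK : valK g (GK g) = gammaElem g := by
  rw [GK, map_sum]; rfl

lemma val_omegaK : valK g (omegaK g) = omegaElem g := by
  rw [omegaK, ← List.prod_ofFn, map_list_prod, List.map_ofFn]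
  rfl

/-! ### the grand expansion -/

lemma grand (r s : ℕ) :
    AK g ^ r * BK g ^ s = (r.factorial * s.factorial) •
      ∑ S ∈ Finset.powersetCard r (Finset.univ : Finset (Fin g)),
        ∑ W ∈ Finset.powersetCard s (Finset.univ : Finset (Fin g × Bool)),
          (∏ j ∈ S, aK j) * ∏ w ∈ W, bK w := by
  rw [AK, BK, esymm_pow aK Finset.univ (fun j _ => aK_sq j) r,
    esymm_pow bK Finset.univ (fun w _ => bK_sq w) s]
  rw [smul_mul_assoc, mul_smul_comm, mul_smul]
  erw [Finset.sum_mul_sum]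
  rfl

/-- terms with an index shared between `S` and `W` vanish -/
lemma term_vanish (S : Finset (Fin g)) (W : Finset (Fin g × Bool))
    (h : ¬ ∀ j ∈ S, ∀ b : Bool, (j, b) ∉ W) :
    (∏ j ∈ S, aK j) * ∏ w ∈ W, bK w = 0 := by
  push_neg at h
  obtain ⟨j, hj, b, hb⟩ := h
  rw [← Finset.mul_prod_erase S aK hj, ← Finset.mul_prod_erase W bK hb]
  have : aK j * ((∏ x ∈ S.erase j, aK x) * (bK (j, b) * ∏ x ∈ W.erase (j, b), bK x))
      = (aK j * bK (j, b)) * ((∏ x ∈ S.erase j, aK x) * ∏ x ∈ W.erase (j, b), bK x) := by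
    ring
  rw [mul_assoc, this, aK_mul_bK, zero_mul]

/-! ### Part G : memberships and the three cases -/

lemma dcount_le_length (l : List (Vg g)) : dcount l ≤ l.length :=
  List.countP_le_length

lemma aE_mem_Mgr (j : Fin g) : aE j ∈ Mgr g 2 := by
  refine Submodule.subset_span ⟨[Pi.single (Sum.inl (Sum.inl j)) 1,
    Pi.single (Sum.inl (Sum.inr j)) 1], ?_, dcount_le_length _, by simp [aE, dgen]⟩
  intro w hw
  rcases List.mem_cons.1 hw with rfl | hw
  · exact Or.inl fun i => by simp [Pi.single_apply]
  · rcases List.mem_cons.1 hw with rfl | hw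
    · exact Or.inl fun i => by simp [Pi.single_apply]
    · simp at hw

lemma bE_mem_Mgr (w : Fin g × Bool) : bE w ∈ Mgr g 1 := by
  rcases w with ⟨j, b⟩
  have key : ∀ u v : Fin g ⊕ Fin g,
      dgen g u * psigen g v ∈ Mgr g 1 := by
    intro u v
    refine Submodule.subset_span ⟨[Pi.single (Sum.inl u) 1, Pi.single (Sum.inr v) 1],
      ?_, ?_, by simp [dgen, psigen]⟩
    · intro w hw
      rcases List.mem_cons.1 hw with rfl | hw
      · exact Or.inl fun i => by simp [Pi.single_apply]
      · rcases List.mem_cons.1 hw with rfl | hw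
        · exact Or.inr fun i => by simp [Pi.single_apply]
        · simp at hw
    · have h1 : ¬ DVec (Pi.single (Sum.inr v) (1:ℂ) : Vg g) := by
        intro h
        simpa using h v
      have h2 : dcount ([] : List (Vg g)) = 0 := List.countP_nil
      rw [dcount_cons, dcount_cons, h2, if_neg h1]
      split <;> omega
  cases b
  · exact key _ _
  · exact neg_mem (key _ _)

lemma prodA_mem (S : Finset (Fin g)) : valK g (∏ j ∈ S, aK j) ∈ Mgr g (2 * S.card) := by
  classical
  induction S using Finset.induction_on with
  | empty => simpa using one_mem_Mgr 0
  | @insert j S hj ih =>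
      rw [Finset.prod_insert hj, map_mul, valK_aK, Finset.card_insert_of_notMem hj]
      have := Mgr_mul (aE_mem_Mgr j) ih
      have heq : 2 + 2 * S.card = 2 * (S.card + 1) := by ring
      rwa [heq] at this

lemma prodB_mem (W : Finset (Fin g × Bool)) : valK g (∏ w ∈ W, bK w) ∈ Mgr g W.card := by
  classical
  induction W using Finset.induction_on with
  | empty => simpa using one_mem_Mgr 0
  | @insert w W hw ih =>
      rw [Finset.prod_insert hw, map_mul, valK_bK, Finset.card_insert_of_notMem hw]
      have := Mgr_mul (bE_mem_Mgr w) ih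
      rwa [add_comm] at this

lemma grand_val (r s : ℕ) :
    ((r.factorial : ℂ)⁻¹ * (s.factorial : ℂ)⁻¹) • (Aelem g ^ r * Belem g ^ s)
      = valK g (∑ S ∈ Finset.powersetCard r (Finset.univ : Finset (Fin g)),
          ∑ W ∈ Finset.powersetCard s (Finset.univ : Finset (Fin g × Bool)),
            (∏ j ∈ S, aK j) * ∏ w ∈ W, bK w) := by
  have h1 : Aelem g ^ r * Belem g ^ s = valK g (AK g ^ r * BK g ^ s) := by
    rw [map_mul, map_pow, map_pow, val_AK, val_BK]
  rw [h1, grand, map_nsmul, ← Nat.cast_smul_eq_nsmul ℂ, smul_smul]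
  have h2 : (r.factorial : ℂ)⁻¹ * (s.factorial : ℂ)⁻¹
      * ((r.factorial * s.factorial : ℕ) : ℂ) = 1 := by
    have hr : (r.factorial : ℂ) ≠ 0 := Nat.cast_ne_zero.2 r.factorial_ne_zero
    have hs : (s.factorial : ℂ) ≠ 0 := Nat.cast_ne_zero.2 s.factorial_ne_zero
    push_cast
    field_simp
  rw [h2, one_smul]

/-- if an index appears in both `S` and `W` the term dies; otherwise `W` fits in `Sᶜ ×ˢ univ` -/
lemma W_subset (S : Finset (Fin g)) (W : Finset (Fin g × Bool))
    (h : ∀ j ∈ S, ∀ b : Bool, (j, b) ∉ W) :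
    W ⊆ Sᶜ ×ˢ (Finset.univ : Finset Bool) := by
  rintro ⟨j, b⟩ hw
  rw [Finset.mem_product, Finset.mem_compl]
  exact ⟨fun hj => h j hj b hw, Finset.mem_univ b⟩

lemma case_two {r s : ℕ} (h : 2 * g < 2 * r + s) :
    Aelem g ^ r * Belem g ^ s = 0 := by
  have h1 : Aelem g ^ r * Belem g ^ s = valK g (AK g ^ r * BK g ^ s) := by
    rw [map_mul, map_pow, map_pow, val_AK, val_BK]
  rw [h1, grand]
  have hz : ∑ S ∈ Finset.powersetCard r (Finset.univ : Finset (Fin g)),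
      ∑ W ∈ Finset.powersetCard s (Finset.univ : Finset (Fin g × Bool)),
        (∏ j ∈ S, aK j) * ∏ w ∈ W, bK w = 0 := by
    refine Finset.sum_eq_zero fun S hS => Finset.sum_eq_zero fun W hW => ?_
    have hScard : S.card = r := (Finset.mem_powersetCard.1 hS).2
    have hWcard : W.card = s := (Finset.mem_powersetCard.1 hW).2
    by_cases hP : ∀ j ∈ S, ∀ b : Bool, (j, b) ∉ W
    · exfalso
      have hsub := W_subset S W hP
      have hcard := Finset.card_le_card hsub
      rw [Finset.card_product, Finset.card_compl] at hcard
      have hr : S.card ≤ g := by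
        have := Finset.card_le_univ S
        simpa using this
      simp only [Fintype.card_fin, Finset.card_univ, Fintype.card_bool] at hcard
      omega
    · exact term_vanish S W hP
  rw [hz, smul_zero, map_zero]

lemma case_one_K {r s : ℕ} (hrg : r ≤ g) (hs : s = 2 * (g - r)) :
    AK g ^ r * BK g ^ s = (r.factorial * s.factorial) •
      ∑ U ∈ Finset.powersetCard (g - r) (Finset.univ : Finset (Fin g)),
        (omegaK g * ∏ j ∈ U, (-cK j)) := by
  rw [grand]
  congr 1
  have hinner : ∀ S ∈ Finset.powersetCard r (Finset.univ : Finset (Fin g)),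
      ∑ W ∈ Finset.powersetCard s (Finset.univ : Finset (Fin g × Bool)),
        (∏ j ∈ S, aK j) * ∏ w ∈ W, bK w
      = omegaK g * ∏ j ∈ Sᶜ, (-cK j) := by
    intro S hS
    have hScard : S.card = r := (Finset.mem_powersetCard.1 hS).2
    have hSc : Sᶜ.card = g - r := by
      rw [Finset.card_compl, hScard]
      simp
    have hW0card : (Sᶜ ×ˢ (Finset.univ : Finset Bool)).card = s := by
      rw [Finset.card_product, hSc]
      simp [hs]
      ring
    have hW0mem : Sᶜ ×ˢ (Finset.univ : Finset Bool)
        ∈ Finset.powersetCard s (Finset.univ : Finset (Fin g × Bool)) :=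
      Finset.mem_powersetCard.2 ⟨Finset.subset_univ _, hW0card⟩
    rw [Finset.sum_eq_single_of_mem _ hW0mem]
    · have hprod : ∏ w ∈ Sᶜ ×ˢ (Finset.univ : Finset Bool), bK w
          = ∏ j ∈ Sᶜ, (aK j * (-cK j)) := by
        rw [Finset.prod_product]
        refine Finset.prod_congr rfl fun j _ => ?_
        rw [Fintype.prod_bool, bK_mul_bK]
        ring
      rw [hprod]
      have : (∏ j ∈ S, aK j) * ∏ j ∈ Sᶜ, (aK j * -cK j)
          = ((∏ j ∈ S, aK j) * ∏ j ∈ Sᶜ, aK j) * ∏ j ∈ Sᶜ, (-cK j) := by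
        rw [Finset.prod_mul_distrib]
        ring
      rw [this, Finset.prod_mul_prod_compl, omegaK]
    · intro W hW hne
      have hWcard : W.card = s := (Finset.mem_powersetCard.1 hW).2
      by_cases hP : ∀ j ∈ S, ∀ b : Bool, (j, b) ∉ W
      · exfalso
        apply hne
        refine Finset.eq_of_subset_of_card_le (W_subset S W hP) ?_
        rw [hW0card, hWcard]
      · exact term_vanish S W hP
  rw [Finset.sum_congr rfl hinner]
  refine Finset.sum_nbij' (fun S => Sᶜ) (fun U => Uᶜ) ?_ ?_ ?_ ?_ ?_
  · intro S hS
    refine Finset.mem_powersetCard.2 ⟨Finset.subset_univ _, ?_⟩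
    rw [Finset.card_compl, (Finset.mem_powersetCard.1 hS).2]
    simp
  · intro U hU
    refine Finset.mem_powersetCard.2 ⟨Finset.subset_univ _, ?_⟩
    rw [Finset.card_compl, (Finset.mem_powersetCard.1 hU).2]
    simp
    omega
  · intro S _; exact compl_compl S
  · intro U _; exact compl_compl U
  · intro S _; rfl

lemma case_one_val {r s : ℕ} (hrg : r ≤ g) (hs : s = 2 * (g - r)) :
    ((r.factorial : ℂ)⁻¹ * (s.factorial : ℂ)⁻¹) • (Aelem g ^ r * Belem g ^ s)
      = ((g - r).factorial : ℂ)⁻¹ • (omegaElem g * (-gammaElem g) ^ (g - r)) := by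
  have h1 : Aelem g ^ r * Belem g ^ s = valK g (AK g ^ r * BK g ^ s) := by
    rw [map_mul, map_pow, map_pow, val_AK, val_BK]
  have h2 : omegaElem g * (-gammaElem g) ^ (g - r)
      = valK g (omegaK g * (-GK g) ^ (g - r)) := by
    rw [map_mul, map_pow, map_neg, val_omegaK, val_GK]
  have h3 : (-GK g) ^ (g - r) = (g - r).factorial •
      ∑ U ∈ Finset.powersetCard (g - r) (Finset.univ : Finset (Fin g)),
        ∏ j ∈ U, (-cK j) := by
    have : -GK g = ∑ j : Fin g, (-cK j) := by rw [GK]; erw [← Finset.sum_neg_distrib]; rfl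
    rw [this, esymm_pow _ _ (fun j _ => negcK_sq j) (g - r)]
  have hcoef1 : (r.factorial : ℂ)⁻¹ * (s.factorial : ℂ)⁻¹
      * ((r.factorial * s.factorial : ℕ) : ℂ) = 1 := by
    have hr : (r.factorial : ℂ) ≠ 0 := Nat.cast_ne_zero.2 r.factorial_ne_zero
    have hs : (s.factorial : ℂ) ≠ 0 := Nat.cast_ne_zero.2 s.factorial_ne_zero
    push_cast
    field_simp
  have hcoef2 : ((g - r).factorial : ℂ)⁻¹ * (((g - r).factorial : ℕ) : ℂ) = 1 := by
    have hp : ((g - r).factorial : ℂ) ≠ 0 := Nat.cast_ne_zero.2 (g - r).factorial_ne_zero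
    field_simp
  rw [h1, case_one_K hrg hs, h2, h3, mul_smul_comm]
  erw [Finset.mul_sum]
  rw [map_nsmul, map_nsmul,
    ← Nat.cast_smul_eq_nsmul ℂ, ← Nat.cast_smul_eq_nsmul ℂ, smul_smul, smul_smul,
    hcoef1, hcoef2, one_smul]
  exact (one_smul ℂ _).symm

/-- **Zagier's lemma** (the exterior-algebra model of Lemma 3.6 of the paper).
(i) If `2r + s = 2g` then `s = 2p` is even and `(A^r/r!)∧(B^s/s!) = ω∧((−γ)^p/p!)`;
(ii) if `2r + s > 2g` then `A^r∧B^s = 0`;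
(iii) if `2r + s < 2g` then `(A^r/r!)∧(B^s/s!)` has a (unique) expansion `Σ_I d_I∧x_I`
with each `x_I` in the subalgebra generated by the `ψ`'s, and in any such expansion the
coefficient `x_univ` of the top monomial `ω` vanishes. -/
theorem zagier_slant_product_lemma (g : ℕ) (hg : 1 ≤ g) (r s : ℕ) :
    (2 * r + s = 2 * g → ∃ p : ℕ, s = 2 * p ∧
      ((r.factorial : ℂ)⁻¹ * (s.factorial : ℂ)⁻¹) • (Aelem g ^ r * Belem g ^ s)
        = (p.factorial : ℂ)⁻¹ • (omegaElem g * (-gammaElem g) ^ p)) ∧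
    (2 * g < 2 * r + s → Aelem g ^ r * Belem g ^ s = 0) ∧
    (2 * r + s < 2 * g →
      (∃ x : Finset (Fin g ⊕ Fin g) → Λ g,
        (∀ I, x I ∈ Algebra.adjoin ℂ (Set.range (psigen g))) ∧
        ((r.factorial : ℂ)⁻¹ * (s.factorial : ℂ)⁻¹) • (Aelem g ^ r * Belem g ^ s)
          = ∑ I : Finset (Fin g ⊕ Fin g), dWedge g I * x I) ∧
      (∀ x : Finset (Fin g ⊕ Fin g) → Λ g,
        (∀ I, x I ∈ Algebra.adjoin ℂ (Set.range (psigen g))) →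
        ((r.factorial : ℂ)⁻¹ * (s.factorial : ℂ)⁻¹) • (Aelem g ^ r * Belem g ^ s)
          = (∑ I : Finset (Fin g ⊕ Fin g), dWedge g I * x I) →
        x Finset.univ = 0)) := by
  refine ⟨?_, fun h => case_two h, ?_⟩
  · intro h
    have hrg : r ≤ g := by omega
    exact ⟨g - r, by omega, case_one_val hrg (by omega)⟩
  · intro h
    have hmem : ((r.factorial : ℂ)⁻¹ * (s.factorial : ℂ)⁻¹) • (Aelem g ^ r * Belem g ^ s)
        ∈ Mgr g (2 * r + s) := by
      rw [grand_val r s, map_sum]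
      refine sum_mem fun S hS => ?_
      rw [map_sum]
      refine sum_mem fun W hW => ?_
      have hScard : S.card = r := (Finset.mem_powersetCard.1 hS).2
      have hWcard : W.card = s := (Finset.mem_powersetCard.1 hW).2
      rw [map_mul]
      have := Mgr_mul (prodA_mem S) (prodB_mem W)
      rwa [hScard, hWcard] at this
    refine ⟨structure_theorem _, ?_⟩
    intro x hx heq
    have h1 : CTl (ord g) (((r.factorial : ℂ)⁻¹ * (s.factorial : ℂ)⁻¹)
        • (Aelem g ^ r * Belem g ^ s)) = x Finset.univ := by
      rw [heq]
      exact CT_expansion x hx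
    have h2 : CTl (ord g) (((r.factorial : ℂ)⁻¹ * (s.factorial : ℂ)⁻¹)
        • (Aelem g ^ r * Belem g ^ s)) = 0 :=
      CTl_zero_of_Mgr (ord g) (2 * r + s) _ hmem (by rw [length_ord]; omega)
    rw [← h1, h2]

end ZagierLemmaStmt
end
end

section
/- Let U and V be finite-dimensional complex vector spaces, let S ∈ End(U) and T ∈ End(V), let m : U × U → V be a bilinear map satisfying m(S u, u′) + m(u, S u′) = T(m(u, u′)) for all u, u′ ∈ U, and let e : V → ℂ be a linear functional such that the bilinear form (u, u′) ↦ e(m(u, u′)) on U is nondegenerate. Then for every eigenvalue λ of S there exists an eigenvalue μ of S such that λ + μ is an eigenvalue of T. -/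
/-- **Spectral transfer through a nondegenerate intertwining pairing**
(the abstract argument in Lemma 5.2 of the paper).  Let `U`, `V` be finite-dimensional
complex vector spaces, `S ∈ End(U)`, `T ∈ End(V)`, `m : U × U → V` bilinear with
`m(Su, u') + m(u, Su') = T(m(u, u'))`, and `e : V → ℂ` linear such that
`(u, u') ↦ e(m(u, u'))` is a nondegenerate bilinear form on `U`.  Then for every
eigenvalue `λ` of `S` there is an eigenvalue `μ` of `S` with `λ + μ` an eigenvalue of `T`. -/
theorem eigenvalue_sum_transfer
    (U V : Type*) [AddCommGroup U] [Module ℂ U] [FiniteDimensional ℂ U]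
    [AddCommGroup V] [Module ℂ V] [FiniteDimensional ℂ V]
    (S : U →ₗ[ℂ] U) (T : V →ₗ[ℂ] V)
    (m : U →ₗ[ℂ] U →ₗ[ℂ] V)
    (hm : ∀ u u' : U, m (S u) u' + m u (S u') = T (m u u'))
    (e : V →ₗ[ℂ] ℂ)
    (hleft : ∀ u : U, (∀ u' : U, e (m u u') = 0) → u = 0)
    (hright : ∀ u' : U, (∀ u : U, e (m u u') = 0) → u' = 0) :
    ∀ lam : ℂ, Module.End.HasEigenvalue S lam →
      ∃ mu : ℂ, Module.End.HasEigenvalue S mu ∧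
        Module.End.HasEigenvalue T (lam + mu) := by
  intro lam hlam
  obtain ⟨u, hu⟩ := hlam.exists_hasEigenvector
  have hu_ne : u ≠ 0 := hu.right
  have hSu : S u = lam • u := hu.apply_eq_smul
  -- key: (T - (lam+mu))^k (m u w) = m u ((S - mu)^k w)
  have key : ∀ (mu : ℂ) (k : ℕ) (w : U),
      ((T - (lam + mu) • (1 : Module.End ℂ V)) ^ k) (m u w)
        = m u (((S - mu • (1 : Module.End ℂ U)) ^ k) w) := by
    intro mu k
    induction k with
    | zero => intro w; simp
    | succ k ih =>
        intro w
        have h1 : ∀ x : U, (T - (lam + mu) • (1 : Module.End ℂ V)) (m u x)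
            = m u ((S - mu • (1 : Module.End ℂ U)) x) := by
          intro x
          simp only [LinearMap.sub_apply, LinearMap.smul_apply, Module.End.one_apply,
            map_sub, map_smul]
          rw [← hm u x, hSu, map_smul, LinearMap.smul_apply, add_smul]
          abel
        rw [pow_succ, pow_succ, Module.End.mul_apply, Module.End.mul_apply, h1, ih]
  -- find w with e (m u w) ≠ 0
  by_contra hcon
  push_neg at hcon
  have hzero : ∀ w : U, e (m u w) = 0 := by
    have htop := Module.End.iSup_maxGenEigenspace_eq_top S
    intro w
    have hw : w ∈ ⨆ mu : ℂ, Module.End.maxGenEigenspace S mu := htop ▸ Submodule.mem_top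
    by_contra hne
    -- show the property "e (m u w) ≠ 0 → False" over the iSup
    induction hw using Submodule.iSup_induction' with
    | mem mu w hwmem =>
        obtain ⟨k, hk⟩ := (Module.End.mem_maxGenEigenspace S mu w).mp hwmem
        have hmuw : m u w ≠ 0 := fun h => hne (by rw [h, map_zero])
        have hwne : w ≠ 0 := fun h => hne (by rw [h, map_zero, map_zero])
        -- mu is an eigenvalue of S
        have hSmu : Module.End.HasEigenvalue S mu := by
          refine Module.End.hasEigenvalue_of_hasGenEigenvalue (k := k) ?_
          rw [Module.End.hasGenEigenvalue_iff]
          intro hbot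
          have : w ∈ Module.End.genEigenspace S mu k := by
            rw [Module.End.mem_genEigenspace_nat]; exact hk
          rw [hbot] at this
          exact hwne (Submodule.mem_bot ℂ |>.mp this)
        -- lam + mu is an eigenvalue of T
        have hT : Module.End.HasEigenvalue T (lam + mu) := by
          refine Module.End.hasEigenvalue_of_hasGenEigenvalue (k := k) ?_
          rw [Module.End.hasGenEigenvalue_iff]
          intro hbot
          have hz : ((T - (lam + mu) • (1 : Module.End ℂ V)) ^ k) (m u w) = 0 := by
            rw [key mu k w, hk, map_zero]
          have hmem : m u w ∈ Module.End.genEigenspace T (lam + mu) k := by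
            rw [Module.End.mem_genEigenspace_nat]; exact hz
          rw [hbot] at hmem
          exact hmuw (Submodule.mem_bot ℂ |>.mp hmem)
        exact hcon mu hSmu hT
    | zero => exact hne (by rw [map_zero, map_zero])
    | add w1 w2 _ _ ih1 ih2 =>
        rw [map_add, map_add] at hne
        rcases (by
          by_contra h
          push_neg at h
          exact hne (by rw [h.1, h.2, add_zero]) : e (m u w1) ≠ 0 ∨ e (m u w2) ≠ 0) with h | h
        · exact ih1 h
        · exact ih2 h
  exact hu_ne (hleft u hzero)
end
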